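/- Let λ and η be signed Borel measures on S¹ and suppose f_λ = f_η. Then λ^a = η^a, where for a signed measure ν the anti-symmetric part is ν^a = (ν − T_#ν)/2. In other words, whenever a function f : S¹ → ℝ is represented by a signed measure λ, the anti-symmetric part λ^a of λ is uniquely determined by f. -/

import Mathlib

open MeasureTheory Real Filter Set Complex
open scoped ENNReal NNReal Classical

noncomputable section

instance : MeasurableSpace Circle := borel Circle
instance : BorelSpace Circle := ⟨rfl⟩

namespace CirclePaper

/-- The spherical (arc-length) distance on the unit circle `S¹ ⊆ ℝ² ≃ ℂ`:
`d_{S¹}(x,y) = arccos ⟨x,y⟩ = arccos (Re (x * conj y))`. -/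
def dS1 (x y : Circle) : ℝ := Real.arccos (((x : ℂ) * (starRingEnd ℂ) (y : ℂ)).re)

/-- The antipodal map `T x = -x` (multiplication by `exp(iπ) = -1`). -/
def antipode (x : Circle) : Circle := Circle.exp π * x

/-- Integral of a function against a signed measure (via the Jordan decomposition). -/
def sInt (l : SignedMeasure Circle) (f : Circle → ℝ) : ℝ :=
  (∫ y, f y ∂l.toJordanDecomposition.posPart) - (∫ y, f y ∂l.toJordanDecomposition.negPart)

/-- `f_λ(x) = ∫_{S¹} d_{S¹}(x,y) λ(dy)`. -/
def fRep (l : SignedMeasure Circle) (x : Circle) : ℝ := sInt l (fun y => dS1 x y)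

/-- `f : S¹ → ℝ` has left derivative `L` at `x` w.r.t. the covering `q(t) = exp(it)`,
i.e. `(f(x +_q t) - f(x))/t → L` as `t → 0⁻`. -/
def HasLeftDerivCircleAt (f : Circle → ℝ) (L : ℝ) (x : Circle) : Prop :=
  Filter.Tendsto (fun t : ℝ => (f (Circle.exp t * x) - f x) / t)
    (nhdsWithin 0 (Set.Iio 0)) (nhds L)

/-- `h : ℝ → ℝ` has left derivative `L` at `t`: `(h(t+s) - h(t))/s → L` as `s → 0⁻`. -/
def HasLeftDerivAtR (h : ℝ → ℝ) (L : ℝ) (t : ℝ) : Prop :=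
  Filter.Tendsto (fun s : ℝ => (h (t + s) - h t) / s)
    (nhdsWithin 0 (Set.Iio 0)) (nhds L)

/-- The total variation `‖g‖_{TV(S¹)}` of `g : S¹ → ℝ`: the supremum of
`Σ |g(q(t_i)) - g(q(t_{i+1}))|` over partitions `0 = t_0 ≤ … ≤ t_{n+1} = 2π`. -/
def circleTV (g : Circle → ℝ) : ℝ≥0∞ := eVariationOn (g ∘ Circle.exp) (Set.Icc 0 (2 * π))

/-- `f` is Lipschitz continuous with respect to the spherical distance. -/
def LipschitzCircle (f : Circle → ℝ) : Prop := ∃ K : ℝ, ∀ x y, |f x - f y| ≤ K * dS1 x y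

/-- The normalized Hausdorff 1-measure on `S¹`, i.e. the rotation-invariant Borel
probability measure (the pushforward of normalized Lebesgue measure on `[0, 2π)`). -/
def hausOne : Measure Circle :=
  (ENNReal.ofReal (2 * π))⁻¹ • Measure.map Circle.exp (volume.restrict (Set.Ico 0 (2 * π)))

instance : IsFiniteMeasure hausOne := by
  constructor
  have h1 : (Measure.map Circle.exp (volume.restrict (Set.Ico 0 (2 * π)))) Set.univ
      = volume (Set.Ico 0 (2 * π)) := by
    rw [Measure.map_apply Circle.exp.continuous.measurable MeasurableSet.univ]
    simp
  simp only [hausOne, Measure.smul_apply, smul_eq_mul, h1, Real.volume_Ico]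
  refine ENNReal.mul_lt_top ?_ ?_
  · exact ENNReal.inv_lt_top.mpr (ENNReal.ofReal_pos.mpr (by positivity))
  · exact ENNReal.ofReal_lt_top

/-- The half-open arc `[x, T(x)) = {x +_q t : t ∈ [0, π)}` of length `π` starting at `x`. -/
def halfArc (x : Circle) : Set Circle := (fun t : ℝ => Circle.exp t * x) '' Set.Ico 0 π

/-- A Borel measure on the circle, regarded as a signed measure
(defined to be `0` if the measure is not finite). -/
def msigned (μ : Measure Circle) : SignedMeasure Circle :=
  if h : IsFiniteMeasure μ then @Measure.toSignedMeasure _ _ μ h else 0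

def w (t : ℝ) : ℝ := Real.arccos (Real.cos t)

lemma w_abs {t : ℝ} (h : t ∈ Set.Icc (-π) π) : w t = |t| := by
  rcases le_or_gt 0 t with ht | ht
  · rw [w, Real.arccos_cos ht h.2, _root_.abs_of_nonneg ht]
  · rw [w, ← Real.cos_neg, Real.arccos_cos (by linarith [h.1]) (by linarith [h.1]),
      _root_.abs_of_neg ht]

lemma round_min (x : ℝ) (n : ℤ) : |x - round x| ≤ |x - n| := by
  rcases eq_or_ne n (round x) with rfl | h
  · exact le_refl _
  · have h1 : |x - round x| ≤ 1/2 := abs_sub_round x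
    have h2 : (1 : ℝ) ≤ |(round x : ℝ) - n| := by
      have h0 : (1 : ℤ) ≤ |round x - n| := Int.one_le_abs (by omega)
      exact_mod_cast h0
    have h3 : |(round x : ℝ) - n| ≤ |(round x : ℝ) - x| + |x - n| := abs_sub_le _ _ _
    have h4 : |(round x : ℝ) - x| = |x - round x| := abs_sub_comm _ _
    linarith

lemma sub_round_mul (hπ : (0:ℝ) < 2*π) (u : ℝ) (m : ℤ) :
    u - 2*π*m = (2*π) * (u/(2*π) - m) := by field_simp

lemma w_eq (t : ℝ) : w t = |t - 2*π*(round (t/(2*π)))| := by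
  have hπ : (0:ℝ) < 2*π := by positivity
  set n := round (t/(2*π)) with hn
  have h1 := abs_sub_round (t/(2*π))
  rw [abs_le] at h1
  have e : t - 2*π*n = (2*π) * (t/(2*π) - n) := sub_round_mul hπ t n
  have hu : t - 2*π*n ∈ Set.Icc (-π) π := by
    constructor
    · have := mul_le_mul_of_nonneg_left h1.1 hπ.le
      rw [← e] at this; linarith
    · have := mul_le_mul_of_nonneg_left h1.2 hπ.le
      rw [← e] at this; linarith
  have hw : w (t - 2*π*n) = |t - 2*π*n| := w_abs hu
  rw [← hw, w, w]
  congr 1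
  rw [show t - 2*π*(n:ℝ) = t - n*(2*π) by ring]
  exact (Real.cos_sub_int_mul_two_pi t n).symm

lemma w_lip (a b : ℝ) : |w a - w b| ≤ |a - b| := by
  have hπ : (0:ℝ) < 2*π := by positivity
  have key : ∀ u v : ℝ, w u - w v ≤ |u - v| := by
    intro u v
    rw [w_eq u, w_eq v]
    have h1 : |u - 2*π*(round (u/(2*π)))| ≤ |u - 2*π*(round (v/(2*π)))| := by
      rw [sub_round_mul hπ u, sub_round_mul hπ u, abs_mul (2*π), abs_mul (2*π),
        _root_.abs_of_pos hπ]
      exact mul_le_mul_of_nonneg_left (round_min (u/(2*π)) _) hπ.le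
    have h2 : |u - 2*π*(round (v/(2*π)))| ≤ |u - v| + |v - 2*π*(round (v/(2*π)))| := by
      have := abs_sub_le u v (2*π*(round (v/(2*π)))); linarith
    linarith
  rw [abs_sub_le_iff]
  exact ⟨key a b, by rw [abs_sub_comm]; exact key b a⟩

def aArg (x y : Circle) : ℝ := Complex.arg ((y : ℂ) * (starRingEnd ℂ) (x : ℂ))

lemma aArg_mem (x y : Circle) : aArg x y ∈ Set.Ioc (-π) π :=
  ⟨Complex.neg_pi_lt_arg _, Complex.arg_le_pi _⟩

lemma mul_conj_eq (x y : Circle) :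
    (y : ℂ) * (starRingEnd ℂ) (x : ℂ) = Complex.exp (aArg x y * Complex.I) := by
  have h := Complex.norm_mul_exp_arg_mul_I ((y : ℂ) * (starRingEnd ℂ) (x : ℂ))
  rw [norm_mul, Complex.norm_conj, Circle.norm_coe, Circle.norm_coe, mul_one,
    Complex.ofReal_one, one_mul] at h
  exact h.symm

lemma conj_mul_self (x : Circle) : (starRingEnd ℂ) (x : ℂ) * (x : ℂ) = 1 := by
  rw [mul_comm, Complex.mul_conj, Circle.normSq_coe, Complex.ofReal_one]

lemma rep (x y : Circle) : y = Circle.exp (aArg x y) * x := by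
  apply Circle.coe_injective
  rw [Circle.coe_mul, Circle.coe_exp, ← mul_conj_eq, mul_assoc, conj_mul_self, mul_one]

lemma aArg_exp {u : ℝ} (hu : u ∈ Set.Ioc (-π) π) (x : Circle) :
    aArg x (Circle.exp u * x) = u := by
  unfold aArg
  rw [Circle.coe_mul, Circle.coe_exp, mul_assoc, mul_comm ((x:ℂ)), conj_mul_self,
    mul_one, Complex.exp_mul_I]
  exact Complex.arg_cos_add_sin_mul_I ⟨hu.1, hu.2⟩

lemma dS1_w (t : ℝ) (x y : Circle) : dS1 (Circle.exp t * x) y = w (t - aArg x y) := by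
  unfold dS1 w
  congr 1
  have h1 : ((Circle.exp t * x : Circle) : ℂ) * (starRingEnd ℂ) (y : ℂ)
      = Complex.exp ((t - aArg x y : ℝ) * Complex.I) := by
    rw [Circle.coe_mul, Circle.coe_exp, mul_assoc]
    have h2 : (x : ℂ) * (starRingEnd ℂ) (y : ℂ)
        = (starRingEnd ℂ) ((y : ℂ) * (starRingEnd ℂ) (x : ℂ)) := by
      rw [map_mul, Complex.conj_conj, mul_comm]
    rw [h2, mul_conj_eq, ← Complex.exp_conj]
    rw [map_mul, Complex.conj_I, Complex.conj_ofReal]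
    rw [← Complex.exp_add]
    congr 1
    push_cast
    ring
  rw [h1, Complex.exp_ofReal_mul_I_re]

lemma measurable_of_continuous {f : Circle → ℂ} (hf : Continuous f) : Measurable f :=
  hf.measurable

lemma measurable_of_continuous' {f : Circle → Circle} (hf : Continuous f) : Measurable f :=
  hf.measurable

lemma measurable_of_continuous_r {f : ℝ → Circle} (hf : Continuous f) : Measurable f :=
  hf.measurable

lemma continuous_coe : Continuous ((↑) : Circle → ℂ) := continuous_subtype_val

lemma measurable_aArg (x : Circle) : Measurable fun y : Circle => aArg x y :=
  Complex.measurable_arg.comp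
    (measurable_of_continuous (continuous_coe.mul continuous_const))

def arcA (x : Circle) : Set Circle := {y | aArg x y ∈ Set.Ioc 0 π}

lemma arcA_meas (x : Circle) : MeasurableSet (arcA x) :=
  measurable_aArg x measurableSet_Ioc

lemma ptwise {a : ℝ} (ha : a ∈ Set.Ioc (-π) π) :
    Tendsto (fun t => (w (t - a) - w (0 - a))/t) (nhdsWithin 0 (Set.Ioi 0))
      (nhds (if a ∈ Set.Ioc 0 π then (-1:ℝ) else 1)) := by
  by_cases hc : a ∈ Set.Ioc 0 π
  · rw [if_pos hc]
    have hmem : Set.Ioo (0:ℝ) a ∈ nhdsWithin 0 (Set.Ioi 0) :=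
      Ioo_mem_nhdsGT_of_mem ⟨le_refl _, hc.1⟩
    have heq : ∀ t ∈ Set.Ioo (0:ℝ) a, (w (t - a) - w (0 - a))/t = -1 := by
      intro t ht
      have h1 : w (t - a) = a - t := by
        rw [w_abs ⟨by linarith [hc.2, ht.1], by linarith [ht.2, Real.pi_pos]⟩,
          abs_of_neg (by linarith [ht.2])]
        ring
      have h2 : w (0 - a) = a := by
        rw [w_abs ⟨by linarith [hc.2], by linarith [hc.1, Real.pi_pos]⟩, zero_sub, abs_neg,
          abs_of_pos hc.1]
      rw [h1, h2, show a - t - a = -t by ring, neg_div, div_self (ne_of_gt ht.1)]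
    exact tendsto_const_nhds.congr' (eventuallyEq_of_mem hmem heq).symm
  · rw [if_neg hc]
    have ha0 : a ≤ 0 := by
      rcases le_or_gt a 0 with h | h
      · exact h
      · exact absurd ⟨h, ha.2⟩ hc
    have hmem : Set.Ioo (0:ℝ) (π + a) ∈ nhdsWithin 0 (Set.Ioi 0) :=
      Ioo_mem_nhdsGT_of_mem ⟨le_refl _, by linarith [ha.1]⟩
    have heq : ∀ t ∈ Set.Ioo (0:ℝ) (π + a), (w (t - a) - w (0 - a))/t = 1 := by
      intro t ht
      have h1 : w (t - a) = t - a := by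
        rw [w_abs ⟨by linarith [ht.1, Real.pi_pos], by linarith [ht.2]⟩,
          _root_.abs_of_pos (by linarith [ht.1])]
      have h2 : w (0 - a) = -a := by
        rw [w_abs ⟨by linarith [ha.2], by linarith [ha.1]⟩, zero_sub, abs_neg,
          abs_of_nonpos ha0]
      rw [h1, h2, show t - a - -a = t by ring, div_self (ne_of_gt ht.1)]
    exact tendsto_const_nhds.congr' (eventuallyEq_of_mem hmem heq).symm

lemma int_w (P : Measure Circle) [IsFiniteMeasure P] (x : Circle) (t : ℝ) :
    Integrable (fun y => w (t - aArg x y)) P := by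
  refine (integrable_const π).mono' ?_ ?_
  · exact ((Real.continuous_arccos.comp Real.continuous_cos).measurable.comp
      (measurable_const.sub (measurable_aArg x))).aestronglyMeasurable
  · refine ae_of_all _ fun y => ?_
    unfold w
    rw [Real.norm_eq_abs, _root_.abs_of_nonneg (Real.arccos_nonneg _)]
    exact Real.arccos_le_pi _

lemma tendsto_aux (P : Measure Circle) [IsFiniteMeasure P] (x : Circle) :
    Tendsto (fun t : ℝ => ((∫ y, w (t - aArg x y) ∂P) - ∫ y, w (0 - aArg x y) ∂P) / t)
      (nhdsWithin 0 (Set.Ioi 0))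
      (nhds ((P Set.univ).toReal - 2 * (P (arcA x)).toReal)) := by
  have key : Tendsto (fun t : ℝ => ∫ y, (w (t - aArg x y) - w (0 - aArg x y))/t ∂P)
      (nhdsWithin 0 (Set.Ioi 0))
      (nhds (∫ y, (if aArg x y ∈ Set.Ioc 0 π then (-1:ℝ) else 1) ∂P)) := by
    apply tendsto_integral_filter_of_dominated_convergence (fun _ => (1:ℝ))
    · exact Eventually.of_forall fun t =>
        (((int_w P x t).sub (int_w P x 0)).div_const t).aestronglyMeasurable
    · filter_upwards [self_mem_nhdsWithin] with t ht
      refine ae_of_all _ fun y => ?_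
      rw [Real.norm_eq_abs, abs_div]
      rw [div_le_one (by rwa [_root_.abs_of_pos ht])]
      calc |w (t - aArg x y) - w (0 - aArg x y)| ≤ |t - aArg x y - (0 - aArg x y)| :=
            w_lip _ _
        _ = |t| := by ring_nf
    · exact integrable_const 1
    · exact ae_of_all _ fun y => ptwise (aArg_mem x y)
  have e1 : ∀ t : ℝ, ((∫ y, w (t - aArg x y) ∂P) - ∫ y, w (0 - aArg x y) ∂P) / t
      = ∫ y, (w (t - aArg x y) - w (0 - aArg x y))/t ∂P := by
    intro t
    rw [← integral_sub (int_w P x t) (int_w P x 0), integral_div]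
  have e2 : (∫ y, (if aArg x y ∈ Set.Ioc 0 π then (-1:ℝ) else 1) ∂P)
      = (P Set.univ).toReal - 2 * (P (arcA x)).toReal := by
    have hfn : (fun y => (if aArg x y ∈ Set.Ioc 0 π then (-1:ℝ) else 1))
        = fun y => 1 - 2 * (arcA x).indicator (fun _ => (1:ℝ)) y := by
      funext y
      by_cases hy : aArg x y ∈ Set.Ioc 0 π
      · rw [if_pos hy, Set.indicator_of_mem (show y ∈ arcA x from hy)]; ring
      · rw [if_neg hy, Set.indicator_of_notMem (show y ∉ arcA x from hy)]; ring
    rw [hfn, integral_sub (integrable_const 1)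
      (((integrable_const (1:ℝ)).indicator (arcA_meas x)).const_mul 2),
      integral_const, integral_const_mul, integral_indicator (arcA_meas x),
      setIntegral_const]
    simp [smul_eq_mul]
    rfl
  rw [← e2]
  exact key.congr fun t => (e1 t).symm

lemma sm_apply (l : SignedMeasure Circle) {E : Set Circle} (hE : MeasurableSet E) :
    l E = (l.toJordanDecomposition.posPart E).toReal
      - (l.toJordanDecomposition.negPart E).toReal := by
  conv_lhs => rw [← l.toSignedMeasure_toJordanDecomposition]
  rw [JordanDecomposition.toSignedMeasure, Measure.toSignedMeasure_sub_apply hE]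
  rfl

lemma dS1_w0 (x y : Circle) : dS1 x y = w (0 - aArg x y) := by
  have := dS1_w 0 x y
  rwa [Circle.exp_zero, one_mul] at this

lemma fRep_quot_tendsto (l : SignedMeasure Circle) (x : Circle) :
    Tendsto (fun t : ℝ => (fRep l (Circle.exp t * x) - fRep l x)/t)
      (nhdsWithin 0 (Set.Ioi 0))
      (nhds (l Set.univ - 2 * l (arcA x))) := by
  have hP := tendsto_aux l.toJordanDecomposition.posPart x
  have hN := tendsto_aux l.toJordanDecomposition.negPart x
  have key := hP.sub hN
  have hfn : (fun t : ℝ => (fRep l (Circle.exp t * x) - fRep l x)/t)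
      = fun t : ℝ =>
        ((∫ y, w (t - aArg x y) ∂l.toJordanDecomposition.posPart)
          - ∫ y, w (0 - aArg x y) ∂l.toJordanDecomposition.posPart) / t
        - ((∫ y, w (t - aArg x y) ∂l.toJordanDecomposition.negPart)
          - ∫ y, w (0 - aArg x y) ∂l.toJordanDecomposition.negPart) / t := by
    funext t
    simp only [fRep, sInt]
    simp only [fun y : Circle => dS1_w t x y, fun y : Circle => dS1_w0 x y]
    ring
  rw [hfn]
  have hval : l Set.univ - 2 * l (arcA x)
      = ((l.toJordanDecomposition.posPart Set.univ).toReal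
          - 2 * (l.toJordanDecomposition.posPart (arcA x)).toReal)
        - ((l.toJordanDecomposition.negPart Set.univ).toReal
          - 2 * (l.toJordanDecomposition.negPart (arcA x)).toReal) := by
    rw [sm_apply l MeasurableSet.univ, sm_apply l (arcA_meas x)]
    ring
  rw [hval]
  exact key

lemma arc_eq {lam eta : SignedMeasure Circle} (h : fRep lam = fRep eta) (x : Circle) :
    lam Set.univ - 2 * lam (arcA x) = eta Set.univ - 2 * eta (arcA x) := by
  have h1 := fRep_quot_tendsto lam x
  have h2 := fRep_quot_tendsto eta x
  rw [h] at h1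
  exact tendsto_nhds_unique h1 h2

def arcE (x : Circle) (a b : ℝ) : Set Circle := (fun t => Circle.exp t * x) '' Set.Ioc a b

lemma exp_eq_self {t u : ℝ} (h : Circle.exp t = Circle.exp u) (hd : |t - u| < 2*π) :
    t = u := by
  obtain ⟨m, hm⟩ := Circle.exp_eq_exp.mp h
  rcases eq_or_ne m 0 with rfl | hm0
  · simpa using hm
  · exfalso
    have h1 : (1:ℝ) ≤ |(m:ℝ)| := by
      have : (1:ℤ) ≤ |m| := Int.one_le_abs hm0
      exact_mod_cast this
    have h2 : |t - u| = |(m:ℝ)| * (2*π) := by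
      rw [hm]; rw [show u + m*(2*π) - u = m * (2*π) by ring, abs_mul,
        _root_.abs_of_pos (by positivity : (0:ℝ) < 2*π)]
    nlinarith [Real.pi_pos]

lemma arcE_injOn (x : Circle) {a b : ℝ} (hab : b - a ≤ 2*π) :
    Set.InjOn (fun t => Circle.exp t * x) (Set.Ioc a b) := by
  intro t ht u hu h
  have h1 : Circle.exp t = Circle.exp u := mul_right_cancel h
  apply exp_eq_self h1
  rw [abs_sub_lt_iff]
  constructor
  · linarith [ht.2, hu.1, Real.pi_pos]
  · linarith [hu.2, ht.1, Real.pi_pos]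

lemma arcE_meas (x : Circle) {a b : ℝ} (hab : b - a ≤ 2*π) : MeasurableSet (arcE x a b) := by
  apply MeasurableSet.image_of_continuousOn_injOn measurableSet_Ioc
  · exact ((Circle.exp.continuous.mul continuous_const)).continuousOn
  · exact arcE_injOn x hab

lemma arcE_shift (x : Circle) (s a b : ℝ) :
    arcE (Circle.exp s * x) a b = arcE x (a+s) (b+s) := by
  ext y
  constructor
  · rintro ⟨t, ht, rfl⟩
    refine ⟨t + s, ⟨by linarith [ht.1], by linarith [ht.2]⟩, ?_⟩
    show Circle.exp (t + s) * x = Circle.exp t * (Circle.exp s * x)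
    rw [Circle.exp_add, mul_assoc]
  · rintro ⟨u, hu, rfl⟩
    refine ⟨u - s, ⟨by linarith [hu.1], by linarith [hu.2]⟩, ?_⟩
    show Circle.exp (u - s) * (Circle.exp s * x) = Circle.exp u * x
    rw [← mul_assoc, ← Circle.exp_add, sub_add_cancel]

lemma arcE_per (x : Circle) (a b : ℝ) : arcE x (a + 2*π) (b + 2*π) = arcE x a b := by
  ext y
  constructor
  · rintro ⟨t, ht, rfl⟩
    refine ⟨t - 2*π, ⟨by linarith [ht.1], by linarith [ht.2]⟩, ?_⟩
    simp only
    rw [show t - 2*π = t + -(2*π) by ring, Circle.exp_add]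
    rw [show Circle.exp (-(2*π)) = 1 by rw [Circle.exp_neg, Circle.exp_two_pi, inv_one]]
    rw [mul_one]
  · rintro ⟨t, ht, rfl⟩
    refine ⟨t + 2*π, ⟨by linarith [ht.1], by linarith [ht.2]⟩, ?_⟩
    simp only
    rw [Circle.exp_add, Circle.exp_two_pi, mul_one]

lemma antipode_preimage (x : Circle) (a b : ℝ) :
    antipode ⁻¹' (arcE x a b) = arcE x (a - π) (b - π) := by
  ext z
  constructor
  · rintro ⟨t, ht, hz⟩
    refine ⟨t - π, ⟨by linarith [ht.1], by linarith [ht.2]⟩, ?_⟩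
    simp only [antipode] at hz
    have hz2 : z = (Circle.exp π)⁻¹ * (Circle.exp t * x) :=
      eq_inv_mul_iff_mul_eq.2 hz.symm
    show Circle.exp (t - π) * x = z
    rw [hz2, ← Circle.exp_neg, ← mul_assoc, ← Circle.exp_add]
    ring_nf
  · rintro ⟨t, ht, rfl⟩
    refine ⟨t + π, ⟨by linarith [ht.1], by linarith [ht.2]⟩, ?_⟩
    show Circle.exp (t + π) * x = antipode (Circle.exp t * x)
    rw [antipode, ← mul_assoc, ← Circle.exp_add, add_comm]

lemma arcE_union {x : Circle} {a b c : ℝ} (hac : a ≤ c) (hcb : c ≤ b) :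
    arcE x a b = arcE x a c ∪ arcE x c b := by
  rw [arcE, arcE, arcE, ← Set.image_union, Set.Ioc_union_Ioc_eq_Ioc hac hcb]

lemma arcE_disj {x : Circle} {a b c : ℝ} (hac : a ≤ c) (hcb : c ≤ b) (hab : b - a ≤ 2*π) :
    Disjoint (arcE x a c) (arcE x c b) := by
  rw [Set.disjoint_left]
  rintro z ⟨t, ht, rfl⟩ ⟨u, hu, huz⟩
  have hut : u = t := arcE_injOn x hab (Set.Ioc_subset_Ioc_left hac hu)
    (Set.Ioc_subset_Ioc_right hcb ht) huz
  rw [hut] at hu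
  exact absurd hu.1 (not_lt.2 ht.2)

lemma arcE_congr (x : Circle) {a b a' b' : ℝ} (ha : a = a') (hb : b = b') :
    arcE x a b = arcE x a' b' := by rw [ha, hb]

lemma antipode_meas : Measurable antipode :=
  measurable_of_continuous' (continuous_const.mul continuous_id)

lemma antipode_invol (z : Circle) : antipode (antipode z) = z := by
  rw [antipode, antipode, ← mul_assoc, ← Circle.exp_add, show π + π = 2*π by ring,
    Circle.exp_two_pi, one_mul]

lemma antipode_pp (E : Set Circle) : antipode ⁻¹' (antipode ⁻¹' E) = E := by
  ext z
  simp [antipode_invol z]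

def om (μ : SignedMeasure Circle) : SignedMeasure Circle := μ - μ.map antipode

lemma om_apply (μ : SignedMeasure Circle) {E : Set Circle} (hE : MeasurableSet E) :
    om μ E = μ E - μ (antipode ⁻¹' E) := by
  rw [om, VectorMeasure.sub_apply, VectorMeasure.map_apply _ antipode_meas hE]

lemma om_anti (μ : SignedMeasure Circle) {E : Set Circle} (hE : MeasurableSet E) :
    om μ (antipode ⁻¹' E) = - om μ E := by
  rw [om_apply μ (antipode_meas hE), om_apply μ hE, antipode_pp]
  ring

section main

variable (μ : SignedMeasure Circle) (c : ℝ)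

lemma om_half (hc : ∀ x, μ (arcE x 0 π) = c) (x : Circle) : om μ (arcE x 0 π) = 0 := by
  have hπ := Real.pi_pos
  rw [om_apply μ (arcE_meas x (by linarith))]
  have h1 : antipode ⁻¹' arcE x 0 π = arcE (Circle.exp π * x) 0 π := by
    rw [antipode_preimage, arcE_shift,
      arcE_congr x (show (0:ℝ)+π = -π + 2*π by ring) (show π+π = 0 + 2*π by ring),
      arcE_per, arcE_congr x (show (-π:ℝ) = 0 - π by ring) (show (0:ℝ) = π - π by ring)]
  rw [h1, hc x, hc _, sub_self]

lemma om_small (hc : ∀ x, μ (arcE x 0 π) = c) (x : Circle) {s : ℝ}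
    (hs : s ∈ Set.Ioc 0 π) : om μ (arcE x 0 s) = 0 := by
  have hπ := Real.pi_pos
  have m1 : MeasurableSet (arcE x 0 s) := arcE_meas x (by linarith [hs.2])
  have m2 : MeasurableSet (arcE x s π) := arcE_meas x (by linarith [hs.1])
  have m3 : MeasurableSet (arcE x π (s+π)) := arcE_meas x (by linarith [hs.2])
  have e1 : om μ (arcE x 0 s) + om μ (arcE x s π) = 0 := by
    rw [← VectorMeasure.of_union (arcE_disj hs.1.le hs.2 (by linarith)) m1 m2,
      ← arcE_union hs.1.le hs.2, om_half μ c hc x]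
  have e2 : om μ (arcE x s π) + om μ (arcE x π (s+π)) = 0 := by
    rw [← VectorMeasure.of_union (arcE_disj hs.2 (by linarith [hs.1]) (by linarith [hs.1])) m2 m3,
      ← arcE_union hs.2 (by linarith [hs.1])]
    have := om_half μ c hc (Circle.exp s * x)
    rwa [arcE_shift, arcE_congr x (zero_add s) (show π + s = s + π by ring)] at this
  have e3 : om μ (arcE x 0 s) = - om μ (arcE x π (s+π)) := by
    have h4 : antipode ⁻¹' (arcE x π (s+π)) = arcE x 0 s := by
      rw [antipode_preimage, arcE_congr x (show π - π = (0:ℝ) by ring)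
        (show s + π - π = s by ring)]
    rw [← h4, om_anti μ m3]
  linarith [e1, e2, e3]

lemma om_arc (hc : ∀ x, μ (arcE x 0 π) = c) (x : Circle) {s : ℝ}
    (hs : s ∈ Set.Ioc 0 (2*π)) : om μ (arcE x 0 s) = 0 := by
  have hπ := Real.pi_pos
  rcases le_or_gt s π with h | h
  · exact om_small μ c hc x ⟨hs.1, h⟩
  · have h1 : s/2 ∈ Set.Ioc 0 π := ⟨by linarith [hs.1], by linarith [hs.2]⟩
    have m1 : MeasurableSet (arcE x 0 (s/2)) := arcE_meas x (by linarith [h1.2])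
    have m2 : MeasurableSet (arcE x (s/2) s) := arcE_meas x (by linarith [h1.2, h1.1])
    have e1 : om μ (arcE x (s/2) s) = 0 := by
      have := om_small μ c hc (Circle.exp (s/2) * x) h1
      rwa [arcE_shift, arcE_congr x (zero_add (s/2)) (show s/2 + s/2 = s by ring)] at this
    rw [arcE_union h1.1.le (by linarith [h1.1] : s/2 ≤ s),
      VectorMeasure.of_union (arcE_disj h1.1.le (by linarith [h1.1]) (by linarith [hs.2])) m1 m2,
      om_small μ c hc x h1, e1, add_zero]

theorem om_eq_zero (hc : ∀ x, μ (arcE x 0 π) = c) : μ - μ.map antipode = 0 := by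
  have hπ := Real.pi_pos
  set P := (om μ).toJordanDecomposition.posPart with hPdef
  set N := (om μ).toJordanDecomposition.negPart with hNdef
  have hargm : Measurable (fun z : Circle => Complex.arg (z:ℂ)) :=
    Complex.measurable_arg.comp (measurable_of_continuous continuous_coe)
  have hexpm : Measurable (fun t : ℝ => Circle.exp t) :=
    measurable_of_continuous_r Circle.exp.continuous
  have key : ∀ E : Set Circle, MeasurableSet E → om μ E = 0 → P E = N E := by
    intro E hE h0
    rw [sm_apply (om μ) hE] at h0
    exact (ENNReal.toReal_eq_toReal_iff' (measure_ne_top _ _) (measure_ne_top _ _)).1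
      (by linarith)
  have hPNarc : ∀ a b : ℝ, a < b → b - a ≤ 2*π → P (arcE 1 a b) = N (arcE 1 a b) := by
    intro a b h1 h2
    have harc : arcE 1 a b = arcE (Circle.exp a * 1) 0 (b - a) := by
      rw [arcE_shift, arcE_congr 1 (zero_add a) (show b - a + a = b by ring)]
    refine key _ (arcE_meas 1 (by linarith)) ?_
    rw [harc]
    exact om_arc μ c hc _ ⟨by linarith, h2⟩
  have hPNuniv : P Set.univ = N Set.univ := by
    refine key _ MeasurableSet.univ ?_
    rw [om_apply μ MeasurableSet.univ, Set.preimage_univ, sub_self]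
  have hpre : ∀ a b : ℝ, (fun z : Circle => Complex.arg (z:ℂ)) ⁻¹' (Set.Ioc a b)
      = arcE 1 (max a (-π)) (min b π) := by
    intro a b
    ext z
    simp only [Set.mem_preimage, Set.mem_Ioc]
    constructor
    · intro hz
      exact ⟨Complex.arg (z:ℂ), ⟨max_lt hz.1 (Complex.neg_pi_lt_arg _),
        le_min hz.2 (Complex.arg_le_pi _)⟩, by
          show Circle.exp (Complex.arg (z:ℂ)) * 1 = z
          rw [mul_one]; exact Circle.exp_arg z⟩
    · rintro ⟨t, ht, htz⟩
      have htz' : Circle.exp t * 1 = z := htz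
      rw [mul_one] at htz'
      have h1 : -π < t := lt_of_le_of_lt (le_max_right a (-π)) ht.1
      have h2 : t ≤ π := le_trans ht.2 (min_le_right b π)
      rw [← htz', Circle.arg_exp h1 h2]
      exact ⟨lt_of_le_of_lt (le_max_left a (-π)) ht.1, le_trans ht.2 (min_le_left b π)⟩
  have hmap : P.map (fun z : Circle => Complex.arg (z:ℂ))
      = N.map (fun z : Circle => Complex.arg (z:ℂ)) := by
    haveI : IsFiniteMeasure (P.map (fun z : Circle => Complex.arg (z:ℂ))) :=
      P.isFiniteMeasure_map _
    apply Measure.ext_of_Ioc_finite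
    · rw [Measure.map_apply hargm MeasurableSet.univ,
        Measure.map_apply hargm MeasurableSet.univ, Set.preimage_univ]
      exact hPNuniv
    · intro a b hab
      rw [Measure.map_apply hargm measurableSet_Ioc,
        Measure.map_apply hargm measurableSet_Ioc, hpre]
      rcases lt_or_ge (max a (-π)) (min b π) with h | h
      · refine hPNarc _ _ h ?_
        have h3 : min b π ≤ π := min_le_right _ _
        have h4 : -π ≤ max a (-π) := le_max_right _ _
        linarith
      · have : arcE 1 (max a (-π)) (min b π) = ∅ := by
          rw [arcE, Set.Ioc_eq_empty (not_lt.2 h), Set.image_empty]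
        rw [this]
        simp
  have hcomp : (fun t : ℝ => Circle.exp t) ∘ (fun z : Circle => Complex.arg (z:ℂ)) = id :=
    funext fun z => Circle.exp_arg z
  have hPN : P = N := by
    calc P = ((P.map (fun z : Circle => Complex.arg (z:ℂ))).map (fun t : ℝ => Circle.exp t)) := by
          rw [Measure.map_map hexpm hargm, hcomp, Measure.map_id]
      _ = ((N.map (fun z : Circle => Complex.arg (z:ℂ))).map (fun t : ℝ => Circle.exp t)) := by
          rw [hmap]
      _ = N := by rw [Measure.map_map hexpm hargm, hcomp, Measure.map_id]
  have hom0 : om μ = 0 := by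
    apply VectorMeasure.ext
    intro E hE
    rw [sm_apply (om μ) hE, VectorMeasure.zero_apply]
    rw [show (om μ).toJordanDecomposition.posPart = P from rfl,
      show (om μ).toJordanDecomposition.negPart = N from rfl, hPN, sub_self]
  exact hom0

end main


lemma arcA_eq (x : Circle) : arcA x = arcE x 0 π := by
  ext y
  constructor
  · intro hy
    exact ⟨aArg x y, hy, (rep x y).symm⟩
  · rintro ⟨t, ht, rfl⟩
    show aArg x (Circle.exp t * x) ∈ Set.Ioc 0 π
    rw [aArg_exp ⟨by linarith [ht.1, Real.pi_pos], ht.2⟩ x]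
    exact ht


/-- If `f_λ = f_η`, then the anti-symmetric parts agree:
`(λ - T_#λ)/2 = (η - T_#η)/2`. -/
theorem stmt3 (lam eta : SignedMeasure Circle) (h : fRep lam = fRep eta) :
    (2⁻¹ : ℝ) • (lam - lam.map antipode) = (2⁻¹ : ℝ) • (eta - eta.map antipode) := by
  have hπ := Real.pi_pos
  have hmu : ∀ x : Circle, (lam - eta) (arcE x 0 π)
      = (lam Set.univ - eta Set.univ)/2 := by
    intro x
    have h1 := arc_eq h x
    rw [arcA_eq x] at h1
    have h2 : (lam - eta) (arcE x 0 π) = lam (arcE x 0 π) - eta (arcE x 0 π) :=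
      VectorMeasure.sub_apply _ _ _
    rw [h2]
    linarith
  have h0 : (lam - eta) - (lam - eta).map antipode = 0 :=
    om_eq_zero (lam - eta) ((lam Set.univ - eta Set.univ)/2) hmu
  have hms : (lam - eta).map antipode = lam.map antipode - eta.map antipode := by
    apply VectorMeasure.ext
    intro E hE
    rw [VectorMeasure.map_apply _ antipode_meas hE, VectorMeasure.sub_apply,
      VectorMeasure.sub_apply, VectorMeasure.map_apply _ antipode_meas hE,
      VectorMeasure.map_apply _ antipode_meas hE]
  have hkey : lam - lam.map antipode = eta - eta.map antipode := by
    have h0' : (lam - eta) - (lam.map antipode - eta.map antipode) = 0 := by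
      rw [← hms]; exact h0
    have e : (lam - lam.map antipode) - (eta - eta.map antipode)
        = (lam - eta) - (lam.map antipode - eta.map antipode) := by abel
    have := e.trans h0'
    exact sub_eq_zero.mp this
  rw [hkey]

end CirclePaper
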